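/- (Raikov, Stöhr) For every integer h ≥ 2 there exists a thin additive basis of order h: a set A of nonnegative integers that is an additive basis of order h together with a constant C > 0 such that the counting function satisfies A(x) ≤ C·x^{1/h} for all x ≥ 1. -/

import Mathlib

open Pointwise Filter

/-- The counting function of a set of nonnegative integers: the number of
positive elements of `A` that are at most `n`. -/
noncomputable def countingFn (A : Set ℕ) (n : ℕ) : ℕ := (A ∩ Set.Icc 1 n).ncard

/-- The Shnirel'man density `σ(A) = inf_{n ≥ 1} A(n)/n`. -/
noncomputable def shnirelmanDensity (A : Set ℕ) : ℝ :=
  ⨅ n : {n : ℕ // 0 < n}, (countingFn A (n : ℕ) : ℝ) / ((n : ℕ) : ℝ)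

/-- The lower asymptotic density `d_L(A) = liminf_{n → ∞} A(n)/n`. -/
noncomputable def lowerDensity (A : Set ℕ) : ℝ :=
  liminf (fun n : ℕ => (countingFn A n : ℝ) / (n : ℝ)) atTop

/-- `A` is an additive basis of order `h`: every nonnegative integer is the
sum of exactly `h` elements of `A` (with repetitions allowed). -/
def IsBasisOfOrder (A : Set ℕ) (h : ℕ) : Prop :=
  ∀ n : ℕ, ∃ c : Fin h → ℕ, (∀ i, c i ∈ A) ∧ ∑ i, c i = n

/-- `A` is an asymptotic basis of order `h`: every sufficiently large integer
is the sum of exactly `h` elements of `A` (with repetitions allowed). -/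
def IsAsymptoticBasisOfOrder (A : Set ℕ) (h : ℕ) : Prop :=
  ∀ᶠ n : ℕ in atTop, ∃ c : Fin h → ℕ, (∀ i, c i ∈ A) ∧ ∑ i, c i = n

/-- A minimal asymptotic basis of order `h` is an asymptotic basis of order `h`
no proper subset of which is an asymptotic basis of order `h`. -/
def IsMinimalAsymptoticBasisOfOrder (A : Set ℕ) (h : ℕ) : Prop :=
  IsAsymptoticBasisOfOrder A h ∧
    ∀ B : Set ℕ, B ⊂ A → ¬ IsAsymptoticBasisOfOrder B h

/-- A maximal asymptotic nonbasis of order `h` is a set that is not an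
asymptotic basis of order `h`, but such that adjoining any element outside it
produces an asymptotic basis of order `h`. -/
def IsMaximalAsymptoticNonbasisOfOrder (A : Set ℕ) (h : ℕ) : Prop :=
  ¬ IsAsymptoticBasisOfOrder A h ∧
    ∀ b : ℕ, b ∉ A → IsAsymptoticBasisOfOrder (A ∪ {b}) h


private def spread (h : ℕ) : ℕ → ℕ
  | 0 => 0
  | (m+1) => (m+1) % 2 + 2^h * spread h ((m+1)/2)
decreasing_by exact Nat.div_lt_self (Nat.succ_pos m) one_lt_two

private lemma spread_zero (h : ℕ) : spread h 0 = 0 := by simp [spread]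

private lemma spread_rec (h m : ℕ) : spread h m = m % 2 + 2^h * spread h (m / 2) := by
  cases m with
  | zero => simp [spread]
  | succ k => rw [spread]

private lemma spread_two_mul_add (h b m : ℕ) (hb : b < 2) :
    spread h (b + 2*m) = b + 2^h * spread h m := by
  have h1 : (b + 2*m) % 2 = b := by omega
  have h2 : (b + 2*m) / 2 = m := by omega
  rw [spread_rec, h1, h2]

private lemma le_spread (h : ℕ) : ∀ m, 1 ≤ m → 2^(h * Nat.log 2 m) ≤ spread h m := by
  intro m
  induction m using Nat.strong_induction_on with
  | _ m ih =>
    intro hm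
    rcases eq_or_lt_of_le hm with h1 | h2
    · rw [← h1, spread_rec]
      simp [spread_zero]
    · have hd : 1 ≤ m / 2 := by omega
      have ihd := ih (m/2) (by omega) hd
      have hlogpos : 0 < Nat.log 2 m := Nat.log_pos one_lt_two (by omega)
      have hlog : Nat.log 2 m = Nat.log 2 (m/2) + 1 := by
        have := Nat.log_div_base 2 m
        omega
      calc 2^(h * Nat.log 2 m) = 2^h * 2^(h * Nat.log 2 (m/2)) := by
            rw [hlog]; ring
        _ ≤ 2^h * spread h (m/2) := Nat.mul_le_mul_left _ ihd
        _ ≤ spread h m := by rw [spread_rec h m]; omega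

private lemma bits_sum : ∀ (h r : ℕ), r < 2^h →
    ∑ i ∈ Finset.range h, 2^i * (r.testBit i).toNat = r := by
  intro h
  induction h with
  | zero => intro r hr; interval_cases r; simp
  | succ h ih =>
    intro r hr
    rw [Finset.sum_range_succ']
    have h0 : (r.testBit 0).toNat = r % 2 := by
      rcases Nat.mod_two_eq_zero_or_one r with hp | hp <;>
        simp [Nat.testBit_zero, hp]
    have hsucc : ∀ i, r.testBit (i+1) = (r/2).testBit i := fun i => Nat.testBit_add_one r i
    have hd : r / 2 < 2^h := by
      have : 2^(h+1) = 2 * 2^h := by ring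
      omega
    have := ih (r/2) hd
    calc (∑ i ∈ Finset.range h, 2^(i+1) * (r.testBit (i+1)).toNat) + 2^0 * (r.testBit 0).toNat
        = 2 * (∑ i ∈ Finset.range h, 2^i * ((r/2).testBit i).toNat) + r % 2 := by
          rw [Finset.mul_sum]
          simp only [hsucc, h0, pow_succ, one_mul, pow_zero]
          congr 1
          exact Finset.sum_congr rfl fun x _ => by ring
      _ = 2 * (r/2) + r % 2 := by rw [this]
      _ = r := by omega

private lemma basis_decomp (h : ℕ) (hh : 2 ≤ h) (n : ℕ) :
    ∃ c : Fin h → ℕ, (∀ i : Fin h, ∃ m, c i = 2^(i:ℕ) * spread h m) ∧ ∑ i, c i = n := by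
  induction n using Nat.strong_induction_on with
  | _ n ih =>
    rcases Nat.eq_zero_or_pos n with rfl | hn
    · exact ⟨fun _ => 0, fun i => ⟨0, by simp [spread_zero]⟩, by simp⟩
    · have h2 : 1 < 2^h := by
        calc 1 < 2^2 := by norm_num
          _ ≤ 2^h := Nat.pow_le_pow_right (by norm_num) hh
      have hq : n / 2^h < n := Nat.div_lt_self hn h2
      obtain ⟨c', hc', hsum⟩ := ih (n / 2^h) hq
      choose m hm using hc'
      set r := n % 2^h with hr
      refine ⟨fun i => 2^(i:ℕ) * spread h ((r.testBit i).toNat + 2 * m i),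
        fun i => ⟨_, rfl⟩, ?_⟩
      have hb : ∀ i : Fin h, (r.testBit i).toNat < 2 := fun i => Bool.toNat_lt _
      have key : ∑ i : Fin h, 2^(i:ℕ) * (r.testBit (i:ℕ)).toNat = r := by
        rw [Fin.sum_univ_eq_sum_range (fun i => 2^i * (r.testBit i).toNat)]
        exact bits_sum h r (Nat.mod_lt _ (by omega))
      calc ∑ i : Fin h, 2^(i:ℕ) * spread h ((r.testBit i).toNat + 2 * m i)
          = ∑ i : Fin h, (2^(i:ℕ) * (r.testBit (i:ℕ)).toNat + 2^h * (2^(i:ℕ) * spread h (m i))) := by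
            refine Finset.sum_congr rfl fun i _ => ?_
            rw [spread_two_mul_add h _ _ (hb i)]
            ring
        _ = (∑ i : Fin h, 2^(i:ℕ) * (r.testBit (i:ℕ)).toNat)
              + 2^h * ∑ i : Fin h, 2^(i:ℕ) * spread h (m i) := by
            rw [Finset.sum_add_distrib, Finset.mul_sum]
        _ = r + 2^h * (n / 2^h) := by
            rw [key]
            congr 1
            rw [← hsum]
            exact congrArg _ (Finset.sum_congr rfl fun i _ => (hm i).symm)
        _ = n := by rw [hr]; exact Nat.mod_add_div n (2^h)

private lemma real_root_bound (h : ℕ) (hh : 2 ≤ h) (m x : ℕ)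
    (hmx : (m:ℝ)^h ≤ 2^h * (x:ℝ)) :
    (m:ℝ) ≤ 2 * (x:ℝ) ^ ((1:ℝ)/h) := by
  have hh0 : (h:ℝ) ≠ 0 := by positivity
  have h1 : (m:ℝ) = ((m:ℝ)^h) ^ ((1:ℝ)/h) := by
    rw [← Real.rpow_natCast (m:ℝ) h, ← Real.rpow_mul (by positivity), mul_one_div,
      div_self hh0, Real.rpow_one]
  have hx0 : (0:ℝ) ≤ (x:ℝ) := by positivity
  rw [h1]
  have step := Real.rpow_le_rpow (by positivity) hmx (by positivity : (0:ℝ) ≤ 1/(h:ℝ))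
  refine step.trans_eq ?_
  rw [Real.mul_rpow (by positivity) hx0, ← Real.rpow_natCast (2:ℝ) h,
    ← Real.rpow_mul (by norm_num), mul_one_div, div_self hh0, Real.rpow_one]

theorem exists_thin_basis (h : ℕ) (hh : 2 ≤ h) :
    ∃ (A : Set ℕ) (C : ℝ), IsBasisOfOrder A h ∧ 0 < C ∧
      ∀ x : ℕ, 1 ≤ x → (countingFn A x : ℝ) ≤ C * (x : ℝ) ^ ((1 : ℝ) / h) := by
  set A : Set ℕ := {n | ∃ i, i < h ∧ ∃ m, n = 2^i * spread h m} with hA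
  refine ⟨A, 2*h, ?_, by positivity, ?_⟩
  · intro n
    obtain ⟨c, hc, hsum⟩ := basis_decomp h hh n
    exact ⟨c, fun i => ⟨(i:ℕ), i.isLt, hc i⟩, hsum⟩
  · intro x hx
    have hxr : (1:ℝ) ≤ (x:ℝ) := by exact_mod_cast hx
    set B : ℕ := ⌊2 * (x:ℝ) ^ ((1:ℝ)/h)⌋₊ with hB
    set T : Finset ℕ :=
      (Finset.range h).biUnion (fun i => (Finset.Icc 1 B).image (fun m => 2^i * spread h m))
      with hT
    have hsub : A ∩ Set.Icc 1 x ⊆ ↑T := by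
      rintro n ⟨⟨i, hi, m, rfl⟩, hn1, hnx⟩
      have hm1 : 1 ≤ m := by
        rcases Nat.eq_zero_or_pos m with rfl | hp
        · simp [spread_zero] at hn1
        · exact hp
      -- m^h < 2^h * spread h m
      have hlt : m < 2 ^ (Nat.log 2 m + 1) := Nat.lt_pow_succ_log_self one_lt_two m
      have hpow : m^h ≤ 2^h * spread h m := by
        calc m^h ≤ (2 ^ (Nat.log 2 m + 1))^h := Nat.pow_le_pow_left (le_of_lt hlt) h
          _ = 2^h * 2^(h * Nat.log 2 m) := by rw [← pow_mul]; ring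
          _ ≤ 2^h * spread h m := Nat.mul_le_mul_left _ (le_spread h m hm1)
      have hsx : spread h m ≤ x := by
        have : spread h m ≤ 2^i * spread h m :=
          Nat.le_mul_of_pos_left _ (pow_pos (by norm_num) i)
        omega
      have hmB : m ≤ B := by
        rw [hB]
        apply Nat.le_floor
        apply real_root_bound h hh m x
        have : (m:ℝ)^h ≤ 2^h * (spread h m : ℝ) := by exact_mod_cast hpow
        refine this.trans ?_
        have : (spread h m : ℝ) ≤ (x:ℝ) := by exact_mod_cast hsx
        exact mul_le_mul_of_nonneg_left this (by positivity)
      simp only [hT, Finset.coe_biUnion, Finset.coe_image, Set.mem_iUnion]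
      exact ⟨i, by simpa using hi, Set.mem_image_of_mem _ (by simp [Finset.mem_Icc]; omega)⟩
    have hcount : countingFn A x ≤ h * B := by
      have h1 : countingFn A x ≤ T.card := by
        rw [countingFn, ← Set.ncard_coe_finset]
        exact Set.ncard_le_ncard hsub T.finite_toSet
      have h2 : T.card ≤ h * B := by
        calc T.card ≤ ∑ i ∈ Finset.range h, ((Finset.Icc 1 B).image (fun m => 2^i * spread h m)).card :=
              Finset.card_biUnion_le
          _ ≤ ∑ _i ∈ Finset.range h, B := by
              refine Finset.sum_le_sum fun i _ => ?_
              calc ((Finset.Icc 1 B).image (fun m => 2^i * spread h m)).card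
                  ≤ (Finset.Icc 1 B).card := Finset.card_image_le
                _ = B := by rw [Nat.card_Icc]; omega
          _ = h * B := by rw [Finset.sum_const, Finset.card_range, smul_eq_mul]
      omega
    have hBle : (B:ℝ) ≤ 2 * (x:ℝ) ^ ((1:ℝ)/h) := Nat.floor_le (by positivity)
    calc (countingFn A x : ℝ) ≤ (h:ℝ) * (B:ℝ) := by exact_mod_cast hcount
      _ ≤ (h:ℝ) * (2 * (x:ℝ) ^ ((1:ℝ)/h)) := by
          apply mul_le_mul_of_nonneg_left hBle (by positivity)
      _ = 2 * (h:ℝ) * (x:ℝ) ^ ((1:ℝ)/h) := by ring
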